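/- Let 0 < r <= 1 and define g(l) = r^{2^l}(1-r^{2^l}) f(l) + r^{2^{l+1}}, where f satisfies f(l) <= 1 + r^{-2^l}. Then g(l) <= 1 for all l >= 2; consequently the expected number of join-items at level l valid for both of two patterns with overlap fraction r is at most n/2^l. -/
import Mathlib

/-- For `r ∈ (0,1]` and `l ≥ 2`, if `f l ≤ 1 + 1/r^(2^l)` and
`g l = r^(2^l)*(1-r^(2^l))*f l + r^(2^(l+1))`, then `g l ≤ 1`; consequently the
expected number of join-items at level `l` valid for both patterns, which equals
`(n/2^l) * g l`, is at most `n/2^l`. -/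
theorem stmt_12 (r : ℝ) (hr0 : 0 < r) (hr1 : r ≤ 1) (n : ℝ) (hn : 0 ≤ n)
    (f g : ℕ → ℝ) (l : ℕ) (hl : 2 ≤ l)
    (hf : f l ≤ 1 + 1 / r ^ 2 ^ l)
    (hg : g l = r ^ 2 ^ l * (1 - r ^ 2 ^ l) * f l + r ^ 2 ^ (l + 1)) :
    g l ≤ 1 ∧ n / 2 ^ l * g l ≤ n / 2 ^ l := by
  set x := r ^ 2 ^ l with hx
  have hx0 : 0 < x := pow_pos hr0 _
  have hx1 : x ≤ 1 := pow_le_one₀ hr0.le hr1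
  have h2 : r ^ 2 ^ (l + 1) = x ^ 2 := by
    rw [hx, ← pow_mul, pow_succ]
  have hcoef : 0 ≤ x * (1 - x) := mul_nonneg hx0.le (by linarith)
  have hg1 : g l ≤ 1 := by
    rw [hg, h2]
    have := mul_le_mul_of_nonneg_left hf hcoef
    have hxx : x * (1 - x) * (1 + 1 / x) = 1 - x ^ 2 := by
      field_simp; ring
    nlinarith
  refine ⟨hg1, ?_⟩
  have hpos : (0:ℝ) ≤ n / 2 ^ l := div_nonneg hn (by positivity)
  nlinarith
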